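/- Let (M^n, g, u, λ) be an m-quasi-Einstein manifold. Then the contraction C_{ijk}∇_i u R_{jk} = −((n−2)/(2(m+n−2)))·C_{ijk}T_{ijk}, where C is the Cotton tensor and T is the tensor T_{ijk} = ((m+n−2)/(n−2))(R_{ik}∇_j u − R_{jk}∇_i u) + (m/(n−2))(R_{jl}∇_l u g_{ik} − R_{il}∇_l u g_{jk}) + (((n−1)(n−2)λ + mR)/((n−1)(n−2)))(∇_i u g_{jk} − ∇_j u g_{ik}) − (u/(2(n−1)))(∇_i R g_{jk} − ∇_j R g_{ik}). -/

import Mathlib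

open scoped BigOperators

/-- For an m-quasi-Einstein manifold, the contraction
`C_{ijk}∇_i u R_{jk} = −((n−2)/(2(m+n−2)))·C_{ijk}T_{ijk}` holds, where `C` is the
Cotton tensor (skew-symmetric in its first two indices and trace-free, as used in the
contraction) and `T` is the auxiliary tensor of Lemma CWT.  Stated in an orthonormal
frame at a point, with `du = ∇u`, `dR = ∇R`. -/
theorem cotton_T_contraction
    (n : ℕ) (hn : 3 ≤ n) (m lam u R : ℝ) (hm : 0 < m)
    (g Ric Hess : Fin n → Fin n → ℝ) (du dR : Fin n → ℝ)
    (C T : Fin n → Fin n → Fin n → ℝ)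
    (hg : ∀ i j, g i j = if i = j then (1 : ℝ) else 0)
    (hRicSym : ∀ i j, Ric i j = Ric j i)
    (hR : R = ∑ i : Fin n, Ric i i)
    (hQE : ∀ i j, Hess i j = (u / m) * (Ric i j - lam * g i j))
    (hCskew : ∀ i j k, C i j k = - C j i k)
    (hCtr1 : ∀ k, ∑ i : Fin n, C i i k = 0)
    (hCtr2 : ∀ i, ∑ j : Fin n, C i j j = 0)
    (hT : ∀ i j k, T i j k
        = ((m + (n : ℝ) - 2) / ((n : ℝ) - 2)) * (Ric i k * du j - Ric j k * du i)
        + (m / ((n : ℝ) - 2)) * ((∑ l : Fin n, Ric j l * du l) * g i k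
            - (∑ l : Fin n, Ric i l * du l) * g j k)
        + ((((n : ℝ) - 1) * ((n : ℝ) - 2) * lam + m * R)
            / (((n : ℝ) - 1) * ((n : ℝ) - 2))) * (du i * g j k - du j * g i k)
        - (u / (2 * ((n : ℝ) - 1))) * (dR i * g j k - dR j * g i k)) :
    ∑ i : Fin n, ∑ j : Fin n, ∑ k : Fin n, C i j k * du i * Ric j k
      = -(((n : ℝ) - 2) / (2 * (m + (n : ℝ) - 2)))
          * ∑ i : Fin n, ∑ j : Fin n, ∑ k : Fin n, C i j k * T i j k := by
  have hn3 : (3 : ℝ) ≤ (n : ℝ) := by exact_mod_cast hn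
  have hn2 : ((n : ℝ) - 2) ≠ 0 := by linarith
  have hmn : (m + (n : ℝ) - 2) ≠ 0 := by linarith
  set S := ∑ i : Fin n, ∑ j : Fin n, ∑ k : Fin n, C i j k * du i * Ric j k with hS
  -- trace collapse lemmas
  have hz1 : ∀ f : Fin n → ℝ,
      (∑ i : Fin n, ∑ j : Fin n, ∑ k : Fin n, C i j k * (f i * g j k)) = 0 := by
    intro f
    have h1 : ∀ i j : Fin n, (∑ k : Fin n, C i j k * (f i * g j k)) = C i j j * f i := by
      intro i j
      simp [hg, mul_ite, mul_one, mul_zero, Finset.sum_ite_eq]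
    calc (∑ i : Fin n, ∑ j : Fin n, ∑ k : Fin n, C i j k * (f i * g j k))
        = ∑ i : Fin n, ∑ j : Fin n, C i j j * f i := by
          exact Finset.sum_congr rfl fun i _ => Finset.sum_congr rfl fun j _ => h1 i j
      _ = ∑ i : Fin n, (∑ j : Fin n, C i j j) * f i := by
          exact Finset.sum_congr rfl fun i _ => (Finset.sum_mul ..).symm
      _ = 0 := by simp [hCtr2]
  have hz2 : ∀ f : Fin n → ℝ,
      (∑ i : Fin n, ∑ j : Fin n, ∑ k : Fin n, C i j k * (f j * g i k)) = 0 := by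
    intro f
    have h1 : ∀ i j : Fin n, (∑ k : Fin n, C i j k * (f j * g i k)) = C i j i * f j := by
      intro i j
      simp [hg, mul_ite, mul_one, mul_zero, Finset.sum_ite_eq]
    have h2 : ∀ j : Fin n, (∑ i : Fin n, C i j i) = 0 := by
      intro j
      have : (∑ i : Fin n, C i j i) = -∑ i : Fin n, C j i i := by
        rw [← Finset.sum_neg_distrib]
        exact Finset.sum_congr rfl fun i _ => by rw [hCskew]
      rw [this, hCtr2, neg_zero]
    calc (∑ i : Fin n, ∑ j : Fin n, ∑ k : Fin n, C i j k * (f j * g i k))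
        = ∑ i : Fin n, ∑ j : Fin n, C i j i * f j := by
          exact Finset.sum_congr rfl fun i _ => Finset.sum_congr rfl fun j _ => h1 i j
      _ = ∑ j : Fin n, ∑ i : Fin n, C i j i * f j := Finset.sum_comm
      _ = ∑ j : Fin n, (∑ i : Fin n, C i j i) * f j := by
          exact Finset.sum_congr rfl fun j _ => (Finset.sum_mul ..).symm
      _ = 0 := by simp [h2]
  -- swap lemma
  have e1 : (∑ i : Fin n, ∑ j : Fin n, ∑ k : Fin n, C i j k * (Ric i k * du j)) = -S := by
    rw [hS, ← Finset.sum_neg_distrib, Finset.sum_comm]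
    refine Finset.sum_congr rfl fun i _ => ?_
    rw [← Finset.sum_neg_distrib]
    refine Finset.sum_congr rfl fun j _ => ?_
    rw [← Finset.sum_neg_distrib]
    refine Finset.sum_congr rfl fun k _ => ?_
    rw [hCskew]; ring
  have e2 : (∑ i : Fin n, ∑ j : Fin n, ∑ k : Fin n, C i j k * (Ric j k * du i)) = S := by
    rw [hS]
    exact Finset.sum_congr rfl fun i _ => Finset.sum_congr rfl fun j _ =>
      Finset.sum_congr rfl fun k _ => by ring
  set a : ℝ := (m + (n : ℝ) - 2) / ((n : ℝ) - 2) with ha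
  set b : ℝ := m / ((n : ℝ) - 2) with hb
  set c : ℝ := (((n : ℝ) - 1) * ((n : ℝ) - 2) * lam + m * R) / (((n : ℝ) - 1) * ((n : ℝ) - 2)) with hc
  set d : ℝ := u / (2 * ((n : ℝ) - 1)) with hd
  have key : (∑ i : Fin n, ∑ j : Fin n, ∑ k : Fin n, C i j k * T i j k)
      = -2 * a * S := by
    have expand : ∀ i j k : Fin n, C i j k * T i j k
        = a * (C i j k * (Ric i k * du j)) - a * (C i j k * (Ric j k * du i))
        + b * (C i j k * ((fun j => ∑ l : Fin n, Ric j l * du l) j * g i k))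
        - b * (C i j k * ((fun i => ∑ l : Fin n, Ric i l * du l) i * g j k))
        + c * (C i j k * (du i * g j k)) - c * (C i j k * (du j * g i k))
        - d * (C i j k * (dR i * g j k)) + d * (C i j k * (dR j * g i k)) := by
      intro i j k
      rw [hT]
      ring
    calc (∑ i : Fin n, ∑ j : Fin n, ∑ k : Fin n, C i j k * T i j k)
        = ∑ i : Fin n, ∑ j : Fin n, ∑ k : Fin n,
            (a * (C i j k * (Ric i k * du j)) - a * (C i j k * (Ric j k * du i))
            + b * (C i j k * ((fun j => ∑ l : Fin n, Ric j l * du l) j * g i k))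
            - b * (C i j k * ((fun i => ∑ l : Fin n, Ric i l * du l) i * g j k))
            + c * (C i j k * (du i * g j k)) - c * (C i j k * (du j * g i k))
            - d * (C i j k * (dR i * g j k)) + d * (C i j k * (dR j * g i k))) := by
          exact Finset.sum_congr rfl fun i _ => Finset.sum_congr rfl fun j _ =>
            Finset.sum_congr rfl fun k _ => expand i j k
      _ = a * (∑ i : Fin n, ∑ j : Fin n, ∑ k : Fin n, C i j k * (Ric i k * du j))
          - a * (∑ i : Fin n, ∑ j : Fin n, ∑ k : Fin n, C i j k * (Ric j k * du i))
          + b * (∑ i : Fin n, ∑ j : Fin n, ∑ k : Fin n, C i j k * ((fun j => ∑ l : Fin n, Ric j l * du l) j * g i k))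
          - b * (∑ i : Fin n, ∑ j : Fin n, ∑ k : Fin n, C i j k * ((fun i => ∑ l : Fin n, Ric i l * du l) i * g j k))
          + c * (∑ i : Fin n, ∑ j : Fin n, ∑ k : Fin n, C i j k * (du i * g j k))
          - c * (∑ i : Fin n, ∑ j : Fin n, ∑ k : Fin n, C i j k * (du j * g i k))
          - d * (∑ i : Fin n, ∑ j : Fin n, ∑ k : Fin n, C i j k * (dR i * g j k))
          + d * (∑ i : Fin n, ∑ j : Fin n, ∑ k : Fin n, C i j k * (dR j * g i k)) := by
          simp only [Finset.sum_add_distrib, Finset.sum_sub_distrib, ← Finset.mul_sum]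
      _ = -2 * a * S := by
          rw [e1, e2, hz2 (fun j => ∑ l : Fin n, Ric j l * du l),
            hz1 (fun i => ∑ l : Fin n, Ric i l * du l), hz1 du, hz2 du, hz1 dR, hz2 dR]
          ring
  rw [key, ha]
  field_simp
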